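/- Let A be a commutative ring, X = Spec A, and for open U ⊆ X let O(U) be the subring of ∏_{𝔭 ∈ U} A_𝔭 generated by the image ρ(A) of A together with the inverses ρ(a)⁻¹ for those a ∈ A with ρ(a) invertible. Then for a basic open set U = D(f), the subring O(D(f)) is isomorphic to the localization A_f, via the map sending a/fⁿ to ρ(a)ρ(f)⁻ⁿ. -/

import Mathlib

variable {A : Type*} [CommRing A]

/-- The product of the canonical localization maps `A → ∏_{𝔭 ∈ D(f)} A_𝔭`. -/
noncomputable def rhoD (f : A) :
    A →+* ∀ 𝔭 : (PrimeSpectrum.basicOpen f : Set (PrimeSpectrum A)),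
      Localization.AtPrime 𝔭.1.asIdeal :=
  Pi.ringHom fun 𝔭 => algebraMap A (Localization.AtPrime 𝔭.1.asIdeal)

/-- The subring `O(D(f))` of `∏_{𝔭 ∈ D(f)} A_𝔭` generated by `ρ(A)` together with the
inverses `ρ(a)⁻¹` of those `ρ(a)` that are invertible. -/
noncomputable def ODf (f : A) :
    Subring (∀ 𝔭 : (PrimeSpectrum.basicOpen f : Set (PrimeSpectrum A)),
      Localization.AtPrime 𝔭.1.asIdeal) :=
  Subring.closure (Set.range (rhoD f) ∪
    {y | ∃ a : A, IsUnit (rhoD f a) ∧ y * rhoD f a = 1})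

lemma isUnit_rhoD_iff (f a : A) :
    IsUnit (rhoD f a) ↔
      ∀ 𝔭 : (PrimeSpectrum.basicOpen f : Set (PrimeSpectrum A)), a ∉ 𝔭.1.asIdeal := by
  constructor
  · intro h 𝔭
    exact (IsLocalization.AtPrime.isUnit_to_map_iff
      (Localization.AtPrime 𝔭.1.asIdeal) 𝔭.1.asIdeal a).mp
      (h.map (Pi.evalRingHom _ 𝔭))
  · intro h
    refine isUnit_iff_exists_inv.mpr ⟨fun 𝔭 => ↑((IsLocalization.AtPrime.isUnit_to_map_iff
      (Localization.AtPrime 𝔭.1.asIdeal) 𝔭.1.asIdeal a).mpr (h 𝔭)).unit⁻¹, funext fun 𝔭 => ?_⟩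
    exact IsUnit.mul_val_inv ((IsLocalization.AtPrime.isUnit_to_map_iff
      (Localization.AtPrime 𝔭.1.asIdeal) 𝔭.1.asIdeal a).mpr (h 𝔭))

/-- For a basic open `D(f)`, the subring `O(D(f))` is isomorphic to the localization
`A_f`, via the map sending (the class of) `a` to `ρ a` (hence `a/fⁿ` to `ρ(a)ρ(f)⁻ⁿ`). -/
theorem ODf_iso_localization_away (f : A) :
    ∃ e : Localization.Away f ≃+* ODf f,
      ∀ a : A, ((e (algebraMap A (Localization.Away f) a)) : ∀ 𝔭 :
          (PrimeSpectrum.basicOpen f : Set (PrimeSpectrum A)),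
          Localization.AtPrime 𝔭.1.asIdeal) = rhoD f a := by
  classical
  have hfu : IsUnit (rhoD f f) := (isUnit_rhoD_iff f f).mpr fun 𝔭 => 𝔭.2
  have hymem : (↑hfu.unit⁻¹ : _) ∈ ODf f :=
    Subring.subset_closure (Or.inr ⟨f, hfu, hfu.val_inv_mul⟩)
  set ρ' : A →+* ODf f :=
    (rhoD f).codRestrict (ODf f) (fun a => Subring.subset_closure (Or.inl ⟨a, rfl⟩)) with hρ'
  have hρ'f : IsUnit (ρ' f) := by
    rw [isUnit_iff_exists_inv]
    refine ⟨⟨↑hfu.unit⁻¹, hymem⟩, Subtype.ext ?_⟩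
    exact hfu.mul_val_inv
  set φ : Localization.Away f →+* ODf f := IsLocalization.Away.lift f hρ'f with hφdef
  have hφ : ∀ a, φ (algebraMap A (Localization.Away f) a) = ρ' a :=
    fun a => IsLocalization.Away.lift_eq f hρ'f a
  have hinj : Function.Injective φ := by
    refine (injective_iff_map_eq_zero φ).mpr fun x hx => ?_
    obtain ⟨⟨a, s⟩, rfl⟩ := IsLocalization.mk'_surjective (Submonoid.powers f) x
    dsimp only at hx ⊢
    have h1 : φ (algebraMap A (Localization.Away f) a) = 0 := by
      rw [← IsLocalization.mk'_spec (Localization.Away f) a s, map_mul, hx, zero_mul]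
    rw [hφ] at h1
    have h2 : rhoD f a = 0 := congrArg Subtype.val h1
    have h3 : f ∈ (Ideal.torsionOf A A a).radical := by
      rw [Ideal.radical_eq_sInf, Ideal.mem_sInf]
      rintro J ⟨hle, hp⟩
      by_contra hf
      have h𝔭 : (⟨J, hp⟩ : PrimeSpectrum A) ∈ PrimeSpectrum.basicOpen f := hf
      have h4 : algebraMap A (Localization.AtPrime J) a = 0 :=
        congrFun h2 ⟨⟨J, hp⟩, h𝔭⟩
      obtain ⟨m, hm⟩ := (IsLocalization.map_eq_zero_iff J.primeCompl _ a).mp h4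
      exact m.2 (hle (by simpa [Ideal.mem_torsionOf_iff, smul_eq_mul] using hm))
    obtain ⟨n, hn⟩ := Ideal.mem_radical_iff.mp h3
    rw [Ideal.mem_torsionOf_iff, smul_eq_mul] at hn
    have h5 : algebraMap A (Localization.Away f) a = 0 :=
      (IsLocalization.map_eq_zero_iff (Submonoid.powers f) _ a).mpr ⟨⟨f ^ n, n, rfl⟩, hn⟩
    rw [IsLocalization.mk'_eq_mul_mk'_one, h5, zero_mul]
  have hψ : ∀ a, ((ODf f).subtype.comp φ) (algebraMap A (Localization.Away f) a) = rhoD f a := by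
    intro a
    simp only [RingHom.comp_apply, hφ]
    rfl
  have hsurj : Function.Surjective φ := by
    have hrange : ODf f ≤ ((ODf f).subtype.comp φ).range := by
      refine Subring.closure_le.mpr ?_
      rintro y (⟨a, rfl⟩ | ⟨a, ha, hya⟩)
      · exact ⟨algebraMap A (Localization.Away f) a, hψ a⟩
      · have haU : IsUnit (algebraMap A (Localization.Away f) a) := by
          have hD : PrimeSpectrum.basicOpen f ≤ PrimeSpectrum.basicOpen a := by
            intro 𝔭 h𝔭
            exact (isUnit_rhoD_iff f a).mp ha ⟨𝔭, h𝔭⟩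
          rw [PrimeSpectrum.basicOpen_le_basicOpen_iff] at hD
          obtain ⟨n, hn⟩ := Ideal.mem_radical_iff.mp hD
          obtain ⟨b, hb⟩ := Ideal.mem_span_singleton.mp hn
          have hfn : IsUnit (algebraMap A (Localization.Away f) (f ^ n)) := by
            rw [map_pow]
            exact (IsLocalization.Away.algebraMap_isUnit f).pow n
          rw [hb, map_mul] at hfn
          exact isUnit_of_mul_isUnit_left hfn
        refine ⟨↑haU.unit⁻¹, ?_⟩
        have key : ((ODf f).subtype.comp φ) ↑haU.unit⁻¹ * rhoD f a = 1 := by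
          rw [← hψ a, ← map_mul, IsUnit.val_inv_mul, map_one]
        calc ((ODf f).subtype.comp φ) ↑haU.unit⁻¹
            = (y * rhoD f a) * ((ODf f).subtype.comp φ) ↑haU.unit⁻¹ := by rw [hya, one_mul]
          _ = y * (((ODf f).subtype.comp φ) ↑haU.unit⁻¹ * rhoD f a) := by ring
          _ = y := by rw [key, mul_one]
    rintro ⟨x, hx⟩
    obtain ⟨z, hz⟩ := hrange hx
    exact ⟨z, Subtype.ext hz⟩
  refine ⟨RingEquiv.ofBijective φ ⟨hinj, hsurj⟩, fun a => ?_⟩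
  show ((φ (algebraMap A (Localization.Away f) a)) : _) = rhoD f a
  rw [hφ]
  rfl
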